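/- For N ≥ 2, the critical inverse temperature β_c(N) = min_{m ∈ (0,1)} (1/m) log((1 + (N-1)m)/(1 - m)) satisfies β_c(N) ≤ log N + log(1 + log N) + 1 + log(1 + log N)/log N for N ≥ 3. In particular β_c(N) = Θ(log N). -/

import Mathlib

open Real Set

/-- Upper bound on the critical inverse temperature: for `N ≥ 3`,
`β_c(N) ≤ log N + log(1 + log N) + 1 + log(1 + log N)/log N`. -/
theorem critical_inverse_temperature_upper_bound
    (N : ℕ) (hN : 3 ≤ N) :
    sInf ((fun m : ℝ => (1/m) * Real.log ((1 + (N - 1 : ℝ) * m) / (1 - m))) ''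
        Set.Ioo (0:ℝ) 1)
      ≤ Real.log N + Real.log (1 + Real.log N) + 1
          + Real.log (1 + Real.log N) / Real.log N := by
  have hN3 : (3:ℝ) ≤ (N:ℝ) := by exact_mod_cast hN
  set L : ℝ := Real.log N with hLdef
  have hL1 : 1 < L := by
    have h1 : Real.exp 1 < 3 := by
      have := Real.exp_one_lt_d9
      linarith
    have : Real.exp 1 < (N:ℝ) := lt_of_lt_of_le h1 hN3
    calc (1:ℝ) = Real.log (Real.exp 1) := (Real.log_exp 1).symm
    _ < L := Real.log_lt_log (Real.exp_pos 1) this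
  have hL0 : 0 < L := by linarith
  have hL1' : 0 < 1 + L := by linarith
  set m₀ : ℝ := L / (1 + L) with hm₀
  have hm₀pos : 0 < m₀ := div_pos hL0 hL1'
  have hm₀lt : m₀ < 1 := (div_lt_one hL1').mpr (by linarith)
  have h1m : 1 - m₀ = 1 / (1 + L) := by
    rw [hm₀, eq_div_iff (ne_of_gt hL1'), sub_mul, div_mul_cancel₀ _ (ne_of_gt hL1')]; ring
  have h1mpos : 0 < 1 - m₀ := by linarith
  -- bounded below by 0
  have hbdd : BddBelow ((fun m : ℝ => (1/m) * Real.log ((1 + (N - 1 : ℝ) * m) / (1 - m))) ''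
      Set.Ioo (0:ℝ) 1) := by
    refine ⟨0, ?_⟩
    rintro y ⟨m, ⟨hm0, hm1⟩, rfl⟩
    have h1 : (0:ℝ) < 1 - m := by linarith
    have hnum : (1:ℝ) - m ≤ 1 + (N - 1 : ℝ) * m := by
      have : (0:ℝ) ≤ (N - 1 : ℝ) * m := mul_nonneg (by linarith) hm0.le
      linarith
    have harg : (1:ℝ) ≤ (1 + (N - 1 : ℝ) * m) / (1 - m) :=
      (one_le_div h1).mpr hnum
    have hlog : 0 ≤ Real.log ((1 + (N - 1 : ℝ) * m) / (1 - m)) := Real.log_nonneg harg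
    positivity
  have hmem : (1/m₀) * Real.log ((1 + (N - 1 : ℝ) * m₀) / (1 - m₀)) ∈
      ((fun m : ℝ => (1/m) * Real.log ((1 + (N - 1 : ℝ) * m) / (1 - m))) ''
        Set.Ioo (0:ℝ) 1) := ⟨m₀, ⟨hm₀pos, hm₀lt⟩, rfl⟩
  refine le_trans (csInf_le hbdd hmem) ?_
  -- bound the value at m₀
  have hNpos : (0:ℝ) < (N:ℝ) := by linarith
  have hargle : (1 + (N - 1 : ℝ) * m₀) / (1 - m₀) ≤ (N:ℝ) * (1 + L) := by
    rw [h1m, div_div_eq_mul_div, div_one]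
    have : (1 + (N - 1 : ℝ) * m₀) ≤ (N:ℝ) := by
      have h1 : (N - 1 : ℝ) * m₀ ≤ (N - 1 : ℝ) * 1 :=
        mul_le_mul_of_nonneg_left hm₀lt.le (by linarith)
      linarith
    nlinarith
  have hargpos : 0 < (1 + (N - 1 : ℝ) * m₀) / (1 - m₀) := by
    have : (0:ℝ) < 1 + (N - 1 : ℝ) * m₀ := by nlinarith
    positivity
  have hlogle : Real.log ((1 + (N - 1 : ℝ) * m₀) / (1 - m₀)) ≤ L + Real.log (1 + L) := by
    calc Real.log ((1 + (N - 1 : ℝ) * m₀) / (1 - m₀))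
        ≤ Real.log ((N:ℝ) * (1 + L)) := Real.log_le_log hargpos hargle
      _ = L + Real.log (1 + L) := Real.log_mul (ne_of_gt hNpos) (ne_of_gt hL1')
  have hinv : (1/m₀) = (1 + L) / L := by
    rw [hm₀]; field_simp
  calc (1/m₀) * Real.log ((1 + (N - 1 : ℝ) * m₀) / (1 - m₀))
      ≤ (1/m₀) * (L + Real.log (1 + L)) := by
        have : 0 ≤ 1/m₀ := by positivity
        exact mul_le_mul_of_nonneg_left hlogle this
    _ = L + Real.log (1 + L) + 1 + Real.log (1 + L) / L := by
        rw [hinv]; field_simp; ring
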